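/- Let W be an edge-disjoint set of open wedges of G and let E_W be the set of edges contained in some wedge of W. For every clique partition C of G, the number of edges of E_W crossing C is at least |W| = |E_W|/2. -/

import Mathlib

open scoped Classical

namespace CD

variable {V : Type*}

/-- An open wedge, encoded as a pair `(p, k)` where `p = s(i,j)` is the unordered pair of
endpoint vertices and `k` is the center: `{i,k}` and `{j,k}` are edges and `{i,j}` is not.
Using an unordered pair identifies the wedges `(i,j,k)` and `(j,i,k)`. -/
def IsOpenWedge (G : SimpleGraph V) (w : Sym2 V × V) : Prop :=
  ∃ i j : V, w.1 = s(i, j) ∧ i ≠ j ∧ G.Adj i w.2 ∧ G.Adj j w.2 ∧ ¬ G.Adj i j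

/-- The two edges of a wedge `(s(i,j), k)`, namely `s(i,k)` and `s(j,k)`. -/
def wedgeEdges (w : Sym2 V × V) : Set (Sym2 V) :=
  {e | ∃ x ∈ w.1, e = s(x, w.2)}

/-- The set of open wedges of `G`. -/
def wedgeSet (G : SimpleGraph V) : Set (Sym2 V × V) := {w | IsOpenWedge G w}

/-- `E_W ⊆ E` is an STC labeling if every open wedge has one of its two edges in `E_W`. -/
def IsSTCLabeling (G : SimpleGraph V) (EW : Set (Sym2 V)) : Prop :=
  EW ⊆ G.edgeSet ∧
  ∀ i j k : V, i ≠ j → G.Adj i k → G.Adj j k → ¬ G.Adj i j →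
    s(i, k) ∈ EW ∨ s(j, k) ∈ EW

/-- Minimum size of an STC labeling of `G`. -/
noncomputable def MinSTC (G : SimpleGraph V) : ℕ :=
  sInf {c | ∃ EW : Set (Sym2 V), IsSTCLabeling G EW ∧ EW.ncard = c}

variable [Fintype V] [DecidableEq V]

/-- A clique partition: a partition of the vertex set all of whose parts are cliques in `G`. -/
def IsCliquePartition (G : SimpleGraph V) (C : Finpartition (Finset.univ : Finset V)) : Prop :=
  ∀ P ∈ C.parts, G.IsClique (P : Set V)

/-- An edge crosses the partition iff no part contains both of its endpoints
(equivalently, its endpoints lie in different parts). -/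
def Crosses (C : Finpartition (Finset.univ : Finset V)) (e : Sym2 V) : Prop :=
  ¬ ∃ P ∈ C.parts, ∀ x ∈ e, x ∈ P

/-- The cost of a partition: the number of edges of `G` crossing it. -/
noncomputable def cost (G : SimpleGraph V) (C : Finpartition (Finset.univ : Finset V)) : ℕ :=
  {e | e ∈ G.edgeSet ∧ Crosses C e}.ncard

/-- Optimal cluster deletion value: the minimum cost of a clique partition of `G`. -/
noncomputable def OPTCD (G : SimpleGraph V) : ℕ :=
  sInf {c | ∃ C : Finpartition (Finset.univ : Finset V), IsCliquePartition G C ∧ cost G C = c}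

/-- `B_k(G)`: edges `{i,j} ∈ E` with `i, j ≠ k`, `{i,k} ∈ E` and `{j,k} ∉ E`. -/
def Bset (G : SimpleGraph V) (k : V) : Set (Sym2 V) :=
  {e | ∃ i j : V, e = s(i, j) ∧ G.Adj i j ∧ j ≠ k ∧ G.Adj i k ∧ ¬ G.Adj j k}

/-- `N_k(G)`: unordered pairs `{i,j}` of distinct vertices with `{i,k}, {j,k} ∈ E`
and `{i,j} ∉ E`. -/
def Nset (G : SimpleGraph V) (k : V) : Set (Sym2 V) :=
  {e | ∃ i j : V, e = s(i, j) ∧ i ≠ j ∧ ¬ G.Adj i j ∧ G.Adj i k ∧ G.Adj j k}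

/-- Feasibility for the STC LP relaxation: variables are nonnegative on edges and for every
open wedge `(i,j,k)` centered at `k` we have `x_{ik} + x_{jk} ≥ 1`. -/
def LPFeasible (G : SimpleGraph V) (x : Sym2 V → ℚ) : Prop :=
  (∀ e ∈ G.edgeSet, 0 ≤ x e) ∧
  ∀ i j k : V, i ≠ j → G.Adj i k → G.Adj j k → ¬ G.Adj i j →
    1 ≤ x s(i, k) + x s(j, k)

/-- A solution is half-integral if every edge variable lies in `{0, 1/2, 1}`. -/
def HalfIntegral (G : SimpleGraph V) (x : Sym2 V → ℚ) : Prop :=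
  ∀ e ∈ G.edgeSet, x e = 0 ∨ x e = 1 / 2 ∨ x e = 1

/-- Feasibility for the program (IP2): binary variables `y_e, z_e` on edges, and for every
open wedge `(i,j,k)` centered at `k`, `z_{ik} ≤ y_{jk}` and `z_{jk} ≤ y_{ik}`. -/
def IP2Feasible (G : SimpleGraph V) (y z : Sym2 V → ℚ) : Prop :=
  (∀ e ∈ G.edgeSet, (y e = 0 ∨ y e = 1) ∧ (z e = 0 ∨ z e = 1)) ∧
  ∀ i j k : V, i ≠ j → G.Adj i k → G.Adj j k → ¬ G.Adj i j →
    z s(i, k) ≤ y s(j, k) ∧ z s(j, k) ≤ y s(i, k)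


lemma wedgeEdges_pair {w : Sym2 V × V} {i j : V} (h : w.1 = s(i, j)) :
    wedgeEdges w = {s(i, w.2), s(j, w.2)} := by
  ext e
  simp only [wedgeEdges, h, Set.mem_setOf_eq, Sym2.mem_iff, Set.mem_insert_iff,
    Set.mem_singleton_iff]
  constructor
  · rintro ⟨x, hx | hx, rfl⟩ <;> subst hx <;> simp
  · rintro (rfl | rfl)
    exacts [⟨i, Or.inl rfl, rfl⟩, ⟨j, Or.inr rfl, rfl⟩]

lemma wedgeEdges_ncard {G : SimpleGraph V} {w : Sym2 V × V} (h : IsOpenWedge G w) :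
    (wedgeEdges w).ncard = 2 := by
  obtain ⟨i, j, h1, hij, hik, hjk, -⟩ := h
  rw [wedgeEdges_pair h1]
  refine Set.ncard_pair fun h => ?_
  rcases Sym2.eq_iff.mp h with ⟨rfl, -⟩ | ⟨rfl, rfl⟩
  · exact hij rfl
  · exact G.ne_of_adj hjk rfl

lemma biUnion_ncard {G : SimpleGraph V} [Fintype V] (S : Set (Sym2 V × V)) (hS : S.Finite) :
    (∀ w ∈ S, IsOpenWedge G w) →
    (S.Pairwise fun w₁ w₂ => Disjoint (wedgeEdges w₁) (wedgeEdges w₂)) →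
    (⋃ w ∈ S, wedgeEdges w).ncard = 2 * S.ncard := by
  classical
  refine Set.Finite.induction_on (motive := fun S _ => (∀ w ∈ S, IsOpenWedge G w) →
    (S.Pairwise fun w₁ w₂ => Disjoint (wedgeEdges w₁) (wedgeEdges w₂)) →
    (⋃ w ∈ S, wedgeEdges w).ncard = 2 * S.ncard) S hS (by simp) ?_
  intro a s ha hs ih hW hdisj
  have hd : Disjoint (wedgeEdges a) (⋃ w ∈ s, wedgeEdges w) := by
    refine Set.disjoint_iUnion₂_right.2 fun w hw => ?_
    exact hdisj (Set.mem_insert a s) (Set.mem_insert_iff.2 (Or.inr hw))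
      (fun h => ha (h ▸ hw))
  rw [Set.biUnion_insert, Set.ncard_union_eq hd (Set.toFinite _) (Set.toFinite _),
    Set.ncard_insert_of_notMem ha hs,
    ih (fun w hw => hW w (Set.mem_insert_iff.2 (Or.inr hw)))
      (hdisj.mono (Set.subset_insert a s)),
    wedgeEdges_ncard (hW a (Set.mem_insert a s))]
  ring

theorem statement_6 (G : SimpleGraph V) (W : Set (Sym2 V × V))
    (hW : ∀ w ∈ W, IsOpenWedge G w)
    (hdisj : W.Pairwise fun w₁ w₂ => Disjoint (wedgeEdges w₁) (wedgeEdges w₂))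
    (EW : Set (Sym2 V)) (hEWdef : EW = ⋃ w ∈ W, wedgeEdges w)
    (C : Finpartition (Finset.univ : Finset V)) (hC : IsCliquePartition G C) :
    W.ncard ≤ {e | e ∈ EW ∧ Crosses C e}.ncard ∧ 2 * W.ncard = EW.ncard := by
  classical
  have hWfin : W.Finite := Set.toFinite W
  have hcross : ∀ w ∈ W, ∃ e ∈ wedgeEdges w, Crosses C e := by
    intro w hw
    obtain ⟨i, j, h1, hij, hik, hjk, hnadj⟩ := hW w hw
    by_contra hcon
    push_neg at hcon
    have h2 := wedgeEdges_pair h1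
    have hik' : ¬ Crosses C s(i, w.2) := hcon _ (h2 ▸ Set.mem_insert _ _)
    have hjk' : ¬ Crosses C s(j, w.2) :=
      hcon _ (h2 ▸ Set.mem_insert_iff.2 (Or.inr rfl))
    simp only [Crosses, not_not] at hik' hjk'
    obtain ⟨P, hP, hPe⟩ := hik'
    obtain ⟨Q, hQ, hQe⟩ := hjk'
    have hkP : w.2 ∈ P := hPe _ (Sym2.mem_mk_right _ _)
    have hkQ : w.2 ∈ Q := hQe _ (Sym2.mem_mk_right _ _)
    have hPQ : P = Q := C.eq_of_mem_parts hP hQ hkP hkQ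
    have hiP : i ∈ P := hPe _ (Sym2.mem_mk_left _ _)
    have hjP : j ∈ P := hPQ ▸ hQe _ (Sym2.mem_mk_left _ _)
    exact hnadj (hC P hP hiP hjP hij)
  set f : Sym2 V × V → Sym2 V := fun w =>
    if h : ∃ e ∈ wedgeEdges w, Crosses C e then h.choose else s(w.2, w.2) with hfdef
  have hf1 : ∀ w ∈ W, f w ∈ wedgeEdges w := by
    intro w hw
    simp only [hfdef, dif_pos (hcross w hw)]
    exact (hcross w hw).choose_spec.1
  have hf2 : ∀ w ∈ W, Crosses C (f w) := by
    intro w hw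
    simp only [hfdef, dif_pos (hcross w hw)]
    exact (hcross w hw).choose_spec.2
  constructor
  · refine Set.ncard_le_ncard_of_injOn f (fun w hw => ?_) (fun w₁ h₁ w₂ h₂ heq => ?_)
      (Set.toFinite _)
    · exact ⟨hEWdef ▸ Set.mem_biUnion hw (hf1 w hw), hf2 w hw⟩
    · by_contra hne
      exact (hdisj h₁ h₂ hne).ne_of_mem (hf1 w₁ h₁) (hf1 w₂ h₂) heq
  · rw [hEWdef, biUnion_ncard W hWfin hW hdisj]


end CD
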